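/- The skew group ring H_k = R[x_1^{±1},…,x_k^{±1}] ⋊ R[S_k] over R = ℂ[z, z^{-1}], with relations σ_i x_i σ_i = x_{i+1} and x_i σ_j = σ_j x_i for j ≠ i, i−1, has centre Z(H_k) equal to the ring of symmetric Laurent polynomials R[x_1^{±1},…,x_k^{±1}]^{S_k}. -/

import Mathlib

open Finset

noncomputable section

/-- The ring `A = R[x_1^{±1},…,x_k^{±1}]` of Laurent polynomials over `R = ℂ[z,z^{-1}]`. -/
abbrev LaurentK (k : ℕ) : Type :=
  AddMonoidAlgebra (LaurentPolynomial ℂ) (Fin k → ℤ)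

/-- The additive equivalence of exponent lattices induced by a permutation
(sending the monomial `x^m` to `x^{m ∘ w⁻¹}`, i.e. `x_i ↦ x_{w(i)}`). -/
def shuffle {k : ℕ} (w : Equiv.Perm (Fin k)) : (Fin k → ℤ) ≃+ (Fin k → ℤ) where
  toFun m := m ∘ w.symm
  invFun m := m ∘ w
  left_inv m := by ext i; simp
  right_inv m := by ext i; simp
  map_add' _ _ := rfl

/-- The action of `S_k` on `A` permuting the variables: `w • x_i = x_{w(i)}`. -/
def permAct {k : ℕ} (w : Equiv.Perm (Fin k)) : LaurentK k ≃ₐ[ℂ] LaurentK k :=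
  AddMonoidAlgebra.domCongr ℂ (LaurentPolynomial ℂ) (shuffle w)

/-- The skew group ring `H_k = A ⋊ R[S_k]` (with relations `σ_i x_i σ_i = x_{i+1}`,
`x_i σ_j = σ_j x_i` for `j ≠ i, i−1`), realized as `A`-valued functions on `S_k`;
`f : H k` represents the element `Σ_w f(w)·w`. -/
def Hk (k : ℕ) : Type := Equiv.Perm (Fin k) → LaurentK k

/-- Multiplication in the skew group ring:
`(Σ_u f(u)·u)(Σ_v g(v)·v) = Σ_{u,v} f(u)·(u • g(v))·uv`. -/
def hmul {k : ℕ} (f g : Hk k) : Hk k :=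
  fun w => ∑ u : Equiv.Perm (Fin k), f u * permAct u (g (u⁻¹ * w))

lemma permAct_one {k : ℕ} (a : LaurentK k) : permAct (1 : Equiv.Perm (Fin k)) a = a := by
  have h : shuffle (1 : Equiv.Perm (Fin k)) = AddEquiv.refl _ := by
    apply AddEquiv.ext; intro m; rfl
  rw [permAct, h, AddMonoidAlgebra.domCongr_refl]
  rfl

lemma permAct_single {k : ℕ} (w : Equiv.Perm (Fin k)) (m : Fin k → ℤ)
    (r : LaurentPolynomial ℂ) :
    permAct w (AddMonoidAlgebra.single m r) = AddMonoidAlgebra.single (m ∘ w.symm) r := by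
  rw [permAct]
  exact AddMonoidAlgebra.domCongr_single (R := ℂ) (A := LaurentPolynomial ℂ) (shuffle w) m r

/-- the centre of the skew group ring `H_k` is exactly the set of symmetric
Laurent polynomials `R[x_1^{±1},…,x_k^{±1}]^{S_k}` (supported on the identity permutation
and invariant under the `S_k`-action on the variables). -/
theorem stmt3 {k : ℕ} (f : Hk k) :
    (∀ g : Hk k, hmul f g = hmul g f) ↔
      ((∀ w : Equiv.Perm (Fin k), w ≠ 1 → f w = 0) ∧
        ∀ u : Equiv.Perm (Fin k), permAct u (f 1) = f 1) := by
  constructor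
  · intro hf
    constructor
    · intro w hw
      obtain ⟨i, hi⟩ : ∃ i, w i ≠ i := by
        by_contra h
        push_neg at h
        exact hw (Equiv.ext h)
      set m : Fin k → ℤ := Pi.single i 1 with hm
      set X : LaurentK k := (AddMonoidAlgebra.single m (1 : LaurentPolynomial ℂ) : LaurentK k) with hX
      set Y : LaurentK k :=
        (AddMonoidAlgebra.single (m ∘ ⇑w.symm) (1 : LaurentPolynomial ℂ) : LaurentK k) with hY
      set g : Hk k := fun v => if v = 1 then X else 0 with hg
      have h1 : hmul f g w = f w * Y := by
        show (∑ u : Equiv.Perm (Fin k), f u * permAct u (g (u⁻¹ * w))) = _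
        rw [Finset.sum_eq_single w]
        · rw [inv_mul_cancel]
          simp only [hg, if_pos rfl, hX, hY, permAct_single]
        · intro u _ hu
          have hne : u⁻¹ * w ≠ 1 := fun h => hu (inv_mul_eq_one.mp h)
          simp [hg, hne]
        · simp
      have h2 : hmul g f w = X * f w := by
        show (∑ u : Equiv.Perm (Fin k), g u * permAct u (f (u⁻¹ * w))) = _
        rw [Finset.sum_eq_single 1]
        · simp [hg, permAct_one]
        · intro u _ hu
          simp [hg, hu]
        · simp
      have h3 : f w * Y = f w * X := by
        rw [← h1, hf g, h2, mul_comm]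
      have hmm : (m ∘ ⇑w.symm) ≠ m := by
        intro h
        have h' := congrFun h (w i)
        simp only [Function.comp_apply, Equiv.symm_apply_apply] at h'
        rw [hm] at h'
        simp [Pi.single_apply, hi] at h'
      have hsingle : Y ≠ X := by
        rw [hY, hX]
        intro h
        exact hmm ((AddMonoidAlgebra.single_left_inj one_ne_zero).mp h)
      have h4 : f w * (Y - X) = 0 := by
        rw [mul_sub, h3, sub_self]
      rcases mul_eq_zero.mp h4 with h | h
      · exact h
      · exact absurd (sub_eq_zero.mp h) hsingle
    · intro u
      set g : Hk k := fun v => if v = u then (1 : LaurentK k) else 0 with hg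
      have h1 : hmul f g u = f 1 := by
        show (∑ v : Equiv.Perm (Fin k), f v * permAct v (g (v⁻¹ * u))) = _
        rw [Finset.sum_eq_single 1]
        · rw [permAct_one]
          simp [hg]
        · intro v _ hv
          have hne : v⁻¹ * u ≠ u := by
            intro h
            have h' : v⁻¹ = 1 := mul_right_cancel (b := u) (by simpa using h)
            exact hv (inv_eq_one.mp h')
          simp [hg, hne]
        · simp
      have h2 : hmul g f u = permAct u (f 1) := by
        show (∑ v : Equiv.Perm (Fin k), g v * permAct v (f (v⁻¹ * u))) = _
        rw [Finset.sum_eq_single u]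
        · simp [hg]
        · intro v _ hv
          simp [hg, hv]
        · simp
      rw [← h2, ← hf g, h1]
  · rintro ⟨hsupp, hinv⟩ g
    funext w
    have L : (∑ u : Equiv.Perm (Fin k), f u * permAct u (g (u⁻¹ * w))) = f 1 * g w := by
      rw [Finset.sum_eq_single 1]
      · rw [inv_one, one_mul, permAct_one]
      · intro u _ hu
        rw [hsupp u hu, zero_mul]
      · simp
    have R : (∑ u : Equiv.Perm (Fin k), g u * permAct u (f (u⁻¹ * w))) = g w * f 1 := by
      rw [Finset.sum_eq_single w]
      · rw [inv_mul_cancel, hinv w]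
      · intro u _ hu
        have hne : u⁻¹ * w ≠ 1 := fun h => hu (inv_mul_eq_one.mp h)
        rw [hsupp _ hne, map_zero, mul_zero]
      · simp
    show (∑ u : Equiv.Perm (Fin k), f u * permAct u (g (u⁻¹ * w)))
        = ∑ u : Equiv.Perm (Fin k), g u * permAct u (f (u⁻¹ * w))
    rw [L, R, mul_comm]

end
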